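/- arXiv:2006.01466 — 2 statements merged into one kernel-verified Lean document; each statement's English description precedes it below -/
import Mathlib

section
/- For every P ∈ \widetilde{P}_n, the minimal representative [P] of P satisfies the Lipschitz condition SL3, i.e. [P] ∈ SL_n. In particular, if every state of P has finite extent of incomplete response and P' denotes the transducer with the same states and transitions as P but outputs λ'(a,q) = Λ(a,q) − Λ(ε,q), then for every state p and word Γ with π_{P'}(Γ, p) = p one has |λ'_{P'}(Γ, p)| = |Γ|. -/
/-!
Common definitions: transducers over a finite alphabet, strong synchronization,
cores, ω-equivalence, minimal representatives, the monoids `M_n`, `SL_n`, `SO_n`,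
the groups `O_n`, `L_n`, annotations, and the two-sided full shift.

Throughout, the alphabet is `Fin (n + 2)`, i.e. an alphabet of size `n + 2 ≥ 2`.
-/

namespace ShiftPaper

/-- The alphabet with `n + 2` letters. -/
abbrev A (n : ℕ) : Type := Fin (n + 2)

/-- Finite words over the alphabet. -/
abbrev Word (n : ℕ) : Type := List (A n)

/-- A transducer over the alphabet `A n`: a finite nonempty set of states together with a
transition function `tr` and an output function `out` (possibly asynchronous). -/
structure Transducer (n : ℕ) where
  Q : Type
  fin : Finite Q
  ne : Nonempty Q
  tr : A n → Q → Q
  out : A n → Q → Word n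

variable {n : ℕ}

instance (T : Transducer n) : Finite T.Q := T.fin
instance (T : Transducer n) : Nonempty T.Q := T.ne

/-- Extended transition function, reading a finite word from left to right. -/
def dsts (T : Transducer n) : Word n → T.Q → T.Q
  | [], q => q
  | a :: w, q => dsts T w (T.tr a q)

/-- Extended output function along a finite word. -/
def outs (T : Transducer n) : Word n → T.Q → Word n
  | [], _ => []
  | a :: w, q => T.out a q ++ outs T w (T.tr a q)

/-- Every (nonempty) circuit in the transducer has nonempty output. -/
def CircuitsNonempty (T : Transducer n) : Prop :=
  ∀ (q : T.Q) (w : Word n), w ≠ [] → dsts T w q = q → outs T w q ≠ []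

/-- `T` is synchronizing at level `k`: the state reached after reading any word of
length `k` does not depend on the starting state. -/
def SyncAt (T : Transducer n) (k : ℕ) : Prop :=
  ∀ w : Word n, w.length = k → ∀ p q : T.Q, dsts T w p = dsts T w q

/-- `T` is strongly synchronizing: synchronizing at some level. -/
def StronglySync (T : Transducer n) : Prop := ∃ k, SyncAt T k

/-- The minimal synchronizing level (junk value `0` if `T` is not strongly synchronizing). -/
noncomputable def syncLevel (T : Transducer n) : ℕ := by
  classical
  exact if h : StronglySync T then Nat.find h else 0

/-- The infinite output stream produced from state `q` on reading the infinite input `x`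
(the map `h_q`).  (Well defined on transducers all of whose circuits have nonempty
output; junk values otherwise.) -/
noncomputable def hmap (T : Transducer n) (q : T.Q) (x : ℕ → A n) : ℕ → A n := fun m => by
  classical
  exact if h : ∃ k, m < (outs T ((List.range k).map x) q).length then
    (outs T ((List.range h.choose).map x) q).getD m default
  else default

/-- ω-equality of transducers: a bijection of the state sets under which corresponding
states induce the same maps on infinite sequences. -/
def OmegaEq (T U : Transducer n) : Prop :=
  ∃ f : T.Q ≃ U.Q, ∀ q, hmap T q = hmap U (f q)

/-- The setoid on states given by ω-equivalence of states. -/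
def omegaSetoid (T : Transducer n) : Setoid T.Q :=
  ⟨fun p q => hmap T p = hmap T q, ⟨fun _ => rfl, fun h => h.symm, fun h h' => h.trans h'⟩⟩

/-- The transducer obtained by identifying ω-equivalent states. -/
noncomputable def quotT (T : Transducer n) : Transducer n where
  Q := Quotient (omegaSetoid T)
  fin := Finite.of_surjective (Quotient.mk (omegaSetoid T))
    fun c => ⟨Quotient.out c, Quotient.out_eq c⟩
  ne := ⟨Quotient.mk (omegaSetoid T) (Classical.choice T.ne)⟩
  tr := fun a c => Quotient.mk (omegaSetoid T) (T.tr a (Quotient.out c))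
  out := fun a c => T.out a (Quotient.out c)

/-- `q` is a state of the core of `T`: it is forced by some word whose length is a
synchronizing level of `T`. -/
def CoreState (T : Transducer n) (q : T.Q) : Prop :=
  ∃ (k : ℕ) (w : Word n), SyncAt T k ∧ w.length = k ∧ ∀ p, dsts T w p = q

/-- `T` is core: it equals its core. -/
def IsCore (T : Transducer n) : Prop := ∀ q : T.Q, CoreState T q

/-- Auxiliary predicate used to make the core construction total. -/
def CoreStateE (T : Transducer n) (q : T.Q) : Prop :=
  CoreState T q ∨ ∀ p, ¬ CoreState T p

/-- The core of `T` (as a transducer). -/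
noncomputable def coreT (T : Transducer n) : Transducer n where
  Q := {q : T.Q // CoreStateE T q}
  fin := Subtype.finite
  ne := by
    classical
    by_cases h : ∀ p, ¬ CoreState T p
    · exact ⟨⟨Classical.choice T.ne, Or.inr h⟩⟩
    · push_neg at h
      obtain ⟨p, hp⟩ := h
      exact ⟨⟨p, Or.inl hp⟩⟩
  tr := fun a q => by
    classical
    exact if h : CoreStateE T (T.tr a q.1) then ⟨T.tr a q.1, h⟩ else q
  out := fun a q => T.out a q.1

/-- There exist two inputs whose outputs from `q` disagree at position `j`. -/
def Disagree (T : Transducer n) (q : T.Q) (j : ℕ) : Prop :=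
  ∃ x y : ℕ → A n, hmap T q x j ≠ hmap T q y j

/-- The extent of incomplete response of `q` (the length of `Λ(ε,q)`) is finite. -/
def FiniteExtent (T : Transducer n) (q : T.Q) : Prop := ∃ j, Disagree T q j

/-- The extent of incomplete response `|Λ(ε,q)|` of the state `q`
(junk value `0` when it is infinite). -/
noncomputable def extentLen (T : Transducer n) (q : T.Q) : ℕ := by
  classical
  exact if h : FiniteExtent T q then Nat.find h else 0

/-- The word `Λ(ε,q)`: the greatest common prefix of all outputs from `q`. -/
noncomputable def extentWord (T : Transducer n) (q : T.Q) : Word n :=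
  (List.range (extentLen T q)).map (hmap T q fun _ => default)

/-- `T` has no states of incomplete response (`Λ(ε,q) = ε` for every state `q`). -/
def NoIncomplete (T : Transducer n) : Prop := ∀ q : T.Q, Disagree T q 0

/-- No two distinct states of `T` are ω-equivalent. -/
def WeaklyMinimal (T : Transducer n) : Prop :=
  ∀ p q : T.Q, hmap T p = hmap T q → p = q

/-- The Lipschitz condition (SL3): around any circuit the output is as long as the input. -/
def SL3 (T : Transducer n) : Prop :=
  ∀ (q : T.Q) (Γ : Word n), dsts T Γ q = q → (outs T Γ q).length = Γ.length

/-- `T` is synchronous: it writes exactly one letter for each letter read. -/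
def Synchronous (T : Transducer n) : Prop :=
  ∀ (a : A n) (q : T.Q), (T.out a q).length = 1

/-- Boolean lexicographic comparison of words. -/
def lexLtB : Word n → Word n → Bool
  | [], [] => false
  | [], _ :: _ => true
  | _ :: _, [] => false
  | a :: u, b :: v => if a < b then true else if b < a then false else lexLtB u v

/-- The lexicographically least rotation of a word. -/
def minimalRot (w : Word n) : Word n :=
  ((List.range w.length).map fun i => w.rotate i).foldl
    (fun acc r => if lexLtB r acc then r else acc) w

/-- A nonempty word is prime if it is not a power of a strictly shorter word. -/
def IsPrime (w : Word n) : Prop :=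
  w ≠ [] ∧ ∀ (u : Word n) (k : ℕ), w = (List.replicate k u).flatten → w.length ≤ u.length

/-- `v` is a rotation of `u`. -/
def RotEq (u v : Word n) : Prop := ∃ i : ℕ, v = u.rotate i

/-- The prime word of which the (eventually constant single) image point of `T` is a power
(used for the degenerate transducers `Z_x`; junk values otherwise). -/
noncomputable def periodicRoot (T : Transducer n) : Word n := by
  classical
  exact
    if hp : ∃ m, 0 < m ∧ ∀ j, hmap T (Classical.choice T.ne) (fun _ => default) (j + m) =
        hmap T (Classical.choice T.ne) (fun _ => default) j
    then (List.range (Nat.find hp)).map (hmap T (Classical.choice T.ne) fun _ => default)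
    else [default]

/-- Remove the incomplete response from the states of `T`: replace the output `λ(a,q)` by
`Λ(a,q) - Λ(ε,q)`.  (In the degenerate case where the extents of incomplete response are
infinite, all outputs are replaced by the minimal rotation of the prime root of the unique
image point, so that minimising produces the transducer `Z_x` of the paper.) -/
noncomputable def removeIncomplete (T : Transducer n) : Transducer n where
  Q := T.Q
  fin := T.fin
  ne := T.ne
  tr := T.tr
  out := fun a q => by
    classical
    exact if ∀ p : T.Q, FiniteExtent T p then
      (T.out a q ++ extentWord T (T.tr a q)).drop (extentLen T q)
    else minimalRot (periodicRoot T)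

/-- The minimal representative `[T]` of a strongly synchronizing core transducer `T`:
remove incomplete response, take the core, and identify ω-equivalent states. -/
noncomputable def minRep (T : Transducer n) : Transducer n :=
  quotT (coreT (removeIncomplete T))

/-- The single state transducer `Z_x` which outputs `x` on every input letter. -/
def Zword (x : Word n) : Transducer n where
  Q := PUnit
  fin := inferInstance
  ne := ⟨PUnit.unit⟩
  tr := fun _ q => q
  out := fun _ _ => x

/-- The single state identity transducer. -/
def oneT : Transducer n where
  Q := PUnit
  fin := inferInstance
  ne := ⟨PUnit.unit⟩
  tr := fun _ q => q
  out := fun a _ => [a]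

/-- The product transducer `T * U`: the outputs of `T` are processed by `U`. -/
noncomputable def prodT (T U : Transducer n) : Transducer n where
  Q := T.Q × U.Q
  fin := inferInstance
  ne := ⟨⟨Classical.choice T.ne, Classical.choice U.ne⟩⟩
  tr := fun a p => (T.tr a p.1, dsts U (T.out a p.1) p.2)
  out := fun a p => outs U (T.out a p.1) p.2

/-- The product in `M_n`: the minimal representative of the core of `T * U`. -/
noncomputable def mulT (T U : Transducer n) : Transducer n :=
  minRep (coreT (prodT T U))

/-- Membership in the monoid `M_n` of minimal, strongly synchronizing, core transducers
(a transducer is minimal if it is core, has no states of incomplete response and no two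
distinct ω-equivalent states, or it is one of the degenerate transducers `Z_x` for a prime
word `x` which is least in its rotation class). -/
def MnMem (T : Transducer n) : Prop :=
  CircuitsNonempty T ∧ StronglySync T ∧ IsCore T ∧
    ((NoIncomplete T ∧ WeaklyMinimal T) ∨
      ∃ x : Word n, IsPrime x ∧ minimalRot x = x ∧ OmegaEq T (Zword x))

/-- Membership in the monoid `SL_n`: elements of `M_n` satisfying the Lipschitz condition. -/
def SLnMem (T : Transducer n) : Prop := MnMem T ∧ SL3 T

/-- Membership in the monoid `SO_n`: elements of `M_n` all of whose states induce injective
maps with clopen image. -/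
def SOnMem (T : Transducer n) : Prop :=
  MnMem T ∧ ∀ q : T.Q, Function.Injective (hmap T q) ∧ IsClopen (Set.range (hmap T q))

/-- Membership in the group `O_n`: invertible elements of `SO_n` (with inverse in `SO_n`);
equality in `M_n` is ω-equality. -/
def OnMem (T : Transducer n) : Prop :=
  SOnMem T ∧ ∃ U : Transducer n, SOnMem U ∧ OmegaEq (mulT T U) oneT ∧ OmegaEq (mulT U T) oneT

/-- Membership in the group `L_n = O_n ∩ SL_n`. -/
def LnMem (T : Transducer n) : Prop := OnMem T ∧ SL3 T

/-- Membership in the monoid `\widetilde{P}_n` of weakly minimal, synchronous, strongly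
synchronizing core transducers. -/
def PtildeMem (T : Transducer n) : Prop :=
  CircuitsNonempty T ∧ StronglySync T ∧ IsCore T ∧ Synchronous T ∧ WeaklyMinimal T

/-- The product in `\widetilde{P}_n`: take the product transducer, identify ω-equivalent
states and take the core. -/
noncomputable def ptildeMul (P R : Transducer n) : Transducer n :=
  coreT (quotT (prodT P R))

/-- An annotation of (a strongly synchronizing core transducer satisfying the Lipschitz
condition) `T`. -/
def Annotation (T : Transducer n) (α : T.Q → ℤ) : Prop :=
  ∀ (q : T.Q) (Γ : Word n),
    α (dsts T Γ q) = α q + ((outs T Γ q).length : ℤ) - (Γ.length : ℤ)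

/-! ### The two-sided full shift -/

/-- The space of bi-infinite sequences over the alphabet `A n`. -/
abbrev FullShift (n : ℕ) : Type := ℤ → A n

/-- The `i`-th power of the shift map: `(shiftZ i x) j = x (j - i)`.
The shift `σ` itself is `shiftZ 1`. -/
def shiftZ (i : ℤ) (x : FullShift n) : FullShift n := fun j => x (j - i)

/-- The monoid of endomorphisms of the shift dynamical system: continuous maps on the
space of bi-infinite sequences commuting with the shift. -/
def EndShift (n : ℕ) : Type :=
  {f : FullShift n → FullShift n // Continuous f ∧ ∀ x, f (shiftZ 1 x) = shiftZ 1 (f x)}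

/-- The group of automorphisms of the shift dynamical system: homeomorphisms of the
space of bi-infinite sequences commuting with the shift. -/
def AutShift (n : ℕ) : Type :=
  {f : FullShift n → FullShift n // Continuous f ∧ (∀ x, f (shiftZ 1 x) = shiftZ 1 (f x)) ∧
    ∃ g : FullShift n → FullShift n, Continuous g ∧ (∀ x, g (f x) = x) ∧ ∀ x, f (g x) = x}

/-- The window `x_{i-k} … x_{i-1}` of a bi-infinite sequence. -/
def window (x : FullShift n) (i : ℤ) (k : ℕ) : Word n :=
  (List.range k).map fun j => x (i - (k : ℤ) + (j : ℤ))

/-- The state of `L` forced by the window `x_{i-k} … x_{i-1}`. -/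
noncomputable def forced (L : Transducer n) (k : ℕ) (x : FullShift n) (i : ℤ) : L.Q :=
  dsts L (window x i k) (Classical.choice L.ne)

/-- The output word written while processing the letter `x i`. -/
noncomputable def outAt (L : Transducer n) (k : ℕ) (x : FullShift n) (i : ℤ) : Word n :=
  L.out (x i) (forced L k x i)

/-- The defining specification of the map `(L, α) : X_n^ℤ → X_n^ℤ` induced by an annotated
transducer: for each index `i`, with `q` the state forced by `x_{i-k} … x_{i-1}` and
`w = λ(x_i, q)`, the word `w` occupies the coordinates `i + α q, …, i + α q + |w| - 1`
of the image sequence `y`. -/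
def SpecAt (L : Transducer n) (α : L.Q → ℤ) (k : ℕ) (x y : FullShift n) : Prop :=
  ∀ (i : ℤ) (j : ℕ), j < (outAt L k x i).length →
    y (i + α (forced L k x i) + (j : ℤ)) = (outAt L k x i).getD j default

/-- The map `(L, α) : X_n^ℤ → X_n^ℤ` induced by an annotated transducer. -/
noncomputable def inducedMap (L : Transducer n) (α : L.Q → ℤ) (k : ℕ) :
    FullShift n → FullShift n := fun x m => by
  classical
  exact if h : ∃ p : ℤ × ℕ, p.2 < (outAt L k x p.1).length ∧
      p.1 + α (forced L k x p.1) + (p.2 : ℤ) = m then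
    (outAt L k x h.choose.1).getD h.choose.2 default
  else default

/-- The map `κ` from the states of `T` to the states of its minimal representative. -/
noncomputable def kappa (T : Transducer n) (q : T.Q) : (minRep T).Q := by
  classical
  exact Quotient.mk (omegaSetoid (coreT (removeIncomplete T)))
    (if h : CoreStateE (removeIncomplete T) q then
      (⟨q, h⟩ : (coreT (removeIncomplete T)).Q)
    else Classical.choice (coreT (removeIncomplete T)).ne)

/-- The annotation `\overline{α + β}` of the product `LM` in `SL_n`: its value at the
state `κ (s, t)` is `α s + β t + |Λ(ε, (s,t))|`, the extent of incomplete response being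
computed in `core (L * M)`. -/
noncomputable def annProd (L M : Transducer n) (α : L.Q → ℤ) (β : M.Q → ℤ) :
    (mulT L M).Q → ℤ := fun c =>
  α (Quotient.out c).1.1.1 + β (Quotient.out c).1.1.2 +
    (extentLen (coreT (prodT L M)) (Quotient.out c).1 : ℤ)

/-- The set `ASL_n` of annotated transducers: pairs of a transducer and an integer-valued
function on its states. -/
def ASLPair (n : ℕ) := Σ T : Transducer n, T.Q → ℤ

/-- Membership in `ASL_n`: either the transducer is in `SL_n` with no states of incomplete
response and the function is an annotation of it, or it is a degenerate `Z_a` for a letter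
`a` (whose `annotation ∞` we model by allowing an arbitrary function). -/
def ASLMem (p : ASLPair n) : Prop :=
  (SLnMem p.1 ∧ NoIncomplete p.1 ∧ Annotation p.1 p.2) ∨ ∃ a : A n, OmegaEq p.1 (Zword [a])

/-- Equality in `ASL_n`: ω-equality of the transducers matching up the annotations, with
the two elements possibly both being the degenerate `(Z_a, ∞)` for the same letter `a`. -/
def ASLEq (p q : ASLPair n) : Prop :=
  (∃ f : p.1.Q ≃ q.1.Q, (∀ s, hmap p.1 s = hmap q.1 (f s)) ∧ ∀ s, q.2 (f s) = p.2 s) ∨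
    ∃ a : A n, OmegaEq p.1 (Zword [a]) ∧ OmegaEq q.1 (Zword [a])

/-- The product on `ASL_n`: `(L, α)(M, β) = (LM, \overline{α + β})`. -/
noncomputable def ASLmul (p q : ASLPair n) : ASLPair n :=
  ⟨mulT p.1 q.1, annProd p.1 q.1 p.2 q.2⟩

/-- The identity `(1, 0)` of `ASL_n`. -/
def ASLone : ASLPair n := ⟨oneT, fun _ => 0⟩

/-- Membership in `AL_n`: annotated elements of `L_n`. -/
def ALMem (p : ASLPair n) : Prop := LnMem p.1 ∧ Annotation p.1 p.2

/-- The element `([P], α)` of `ASL_n` with `α ((q) κ) = i + |Λ(ε, q)|`, associated to the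
endomorphism `σ^i ∘ f_P`. -/
noncomputable def phiPair (P : Transducer n) (i : ℤ) : ASLPair n :=
  ⟨minRep P, fun c => i + (extentLen P (Quotient.out c).1 : ℤ)⟩

/-- The unique state at the base of a circuit labelled `Γ` (junk value if there is none). -/
noncomputable def qcirc (T : Transducer n) (Γ : Word n) : T.Q := by
  classical
  exact if h : ∃ q, dsts T Γ q = q then h.choose else Classical.choice T.ne

/-- The prime root of a word: the prime word of which `w` is a power
(junk value `w` if there is none). -/
noncomputable def primeRoot (w : Word n) : Word n := by
  classical
  exact if h : ∃ u : Word n, IsPrime u ∧ ∃ k, w = (List.replicate k u).flatten then h.choose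
  else w

/-- The action of `T ∈ M_n` on (rotation classes of) prime words: `Γ` is sent to the prime
word of which `λ(Γ, q_Γ)` is a power, where `q_Γ` is the unique state with a circuit
labelled `Γ` based at it. -/
noncomputable def PiAct (T : Transducer n) (Γ : Word n) : Word n :=
  primeRoot (outs T Γ (qcirc T Γ))

/-- The cylinder set of one-sided infinite sequences with prefix `ν`. -/
def Cyl (ν : Word n) : Set (ℕ → A n) :=
  {x | ∀ (j : ℕ) (h : j < ν.length), x j = ν.get ⟨j, h⟩}

/-- `m_q = |B(q)|`: the least cardinality of a finite set of words whose cylinders are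
contained in, and together cover, the image of `h_q`. -/
noncomputable def mq (T : Transducer n) (q : T.Q) : ℕ :=
  sInf {m : ℕ | ∃ S : Finset (Word n), S.card = m ∧
    (∀ ν ∈ S, Cyl ν ⊆ Set.range (hmap T q)) ∧
    (⋃ ν ∈ S, Cyl ν) = Set.range (hmap T q)}

/-- The signature homomorphism `sig : O_n → (ℤ/(n-1))^×`, as an element of `ℤ/(n-1)`
(for our alphabet of size `n + 2`, the modulus is `n + 1`). -/
noncomputable def sigT (T : Transducer n) : ZMod (n + 1) :=
  (mq T (Classical.choice T.ne) : ZMod (n + 1))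



/-! ### Auxiliary lemmas -/

section Aux

variable {n : ℕ}

lemma dsts_append (T : Transducer n) (u v : Word n) (q : T.Q) :
    dsts T (u ++ v) q = dsts T v (dsts T u q) := by
  induction u generalizing q with
  | nil => rfl
  | cons a u ih => simpa [dsts] using ih (T.tr a q)

lemma outs_append (T : Transducer n) (u v : Word n) (q : T.Q) :
    outs T (u ++ v) q = outs T u q ++ outs T v (dsts T u q) := by
  induction u generalizing q with
  | nil => rfl
  | cons a u ih => simp [outs, dsts, ih, List.append_assoc]

lemma outs_range_prefix (T : Transducer n) (x : ℕ → A n) (q : T.Q) {k k' : ℕ} (h : k ≤ k') :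
    outs T ((List.range k).map x) q <+: outs T ((List.range k').map x) q := by
  induction k', h using Nat.le_induction with
  | base => exact List.prefix_rfl
  | succ k' hk ih =>
      have h2 : (List.range (k'+1)).map x = (List.range k').map x ++ [x k'] := by
        rw [List.range_succ, List.map_append]; rfl
      rw [h2, outs_append]
      exact ih.trans (List.prefix_append _ _)

lemma hmap_eq (T : Transducer n) (q : T.Q) (x : ℕ → A n) {m k : ℕ}
    (hk : m < (outs T ((List.range k).map x) q).length) :
    hmap T q x m = (outs T ((List.range k).map x) q).getD m default := by
  have hex : ∃ k, m < (outs T ((List.range k).map x) q).length := ⟨k, hk⟩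
  unfold hmap
  rw [dif_pos hex]
  have h1 := hex.choose_spec
  rw [List.getD_eq_getElem _ _ h1, List.getD_eq_getElem _ _ hk]
  rcases le_total hex.choose k with h | h
  · exact (outs_range_prefix T x q h).getElem h1
  · exact ((outs_range_prefix T x q h).getElem hk).symm

lemma hmap_neg (T : Transducer n) (q : T.Q) (x : ℕ → A n) {m : ℕ}
    (h : ¬ ∃ k, m < (outs T ((List.range k).map x) q).length) :
    hmap T q x m = default := by
  unfold hmap; rw [dif_neg h]

lemma hmap_congr (T U : Transducer n) (q : T.Q) (q' : U.Q)
    (h : ∀ w, outs T w q = outs U w q') : hmap T q = hmap U q' := by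
  funext x m
  by_cases hex : ∃ k, m < (outs T ((List.range k).map x) q).length
  · obtain ⟨k, hk⟩ := hex
    have hk' : m < (outs U ((List.range k).map x) q').length := by rw [← h]; exact hk
    rw [hmap_eq T q x hk, hmap_eq U q' x hk', h]
  · have hex' : ¬ ∃ k, m < (outs U ((List.range k).map x) q').length := by
      simpa [← h] using hex
    rw [hmap_neg T q x hex, hmap_neg U q' x hex']

lemma outs_length_sync (T : Transducer n) (hT : Synchronous T) (w : Word n) (q : T.Q) :
    (outs T w q).length = w.length := by
  induction w generalizing q with
  | nil => rfl
  | cons a w ih => simp [outs, hT a q, ih, Nat.add_comm]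

/-- Prepend a finite word to an infinite sequence. -/
def prepend (w : Word n) (x : ℕ → A n) : ℕ → A n :=
  fun i => if h : i < w.length then w[i] else x (i - w.length)

lemma range_map_prepend (w : Word n) (x : ℕ → A n) (t : ℕ) :
    (List.range (w.length + t)).map (prepend w x) = w ++ (List.range t).map x := by
  apply List.ext_getElem (by simp)
  intro i h1 h2
  simp only [List.getElem_map, List.getElem_range]
  by_cases h : i < w.length
  · rw [List.getElem_append_left h]
    simp [prepend, h]
  · rw [List.getElem_append_right (not_lt.mp h)]
    simp [prepend, h]

lemma comp_sync (T : Transducer n) (hT : Synchronous T) (w : Word n) (q : T.Q)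
    (x : ℕ → A n) (j : ℕ) :
    hmap T q (prepend w x) (j + w.length) = hmap T (dsts T w q) x j := by
  have hlen := outs_length_sync T hT
  have h1 : j + w.length <
      (outs T ((List.range (w.length + (j+1))).map (prepend w x)) q).length := by
    rw [hlen]; simp; omega
  have h2 : j < (outs T ((List.range (j+1)).map x) (dsts T w q)).length := by
    rw [hlen]; simp
  rw [hmap_eq T q _ h1, hmap_eq T (dsts T w q) x h2]
  rw [range_map_prepend, outs_append]
  rw [List.getD_eq_getElem _ _ (by simp [List.length_append, hlen]; omega),
      List.getD_eq_getElem _ _ h2]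
  rw [List.getElem_append_right (by rw [hlen]; omega)]
  congr 1
  rw [hlen]; omega

end Aux


section Extent

variable {n : ℕ}

lemma disagree_extent (T : Transducer n) (q : T.Q) (h : FiniteExtent T q) :
    Disagree T q (extentLen T q) := by
  classical
  unfold extentLen; rw [dif_pos h]; exact Nat.find_spec h

lemma hmap_indep (T : Transducer n) (q : T.Q) (h : FiniteExtent T q) {j : ℕ}
    (hj : j < extentLen T q) (x y : ℕ → A n) : hmap T q x j = hmap T q y j := by
  classical
  unfold extentLen at hj; rw [dif_pos h] at hj
  have h2 := Nat.find_min h hj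
  by_contra hne
  exact h2 ⟨x, y, hne⟩

lemma extentLen_le (T : Transducer n) (q : T.Q) (h : FiniteExtent T q) {j : ℕ}
    (hd : Disagree T q j) : extentLen T q ≤ j := by
  classical
  unfold extentLen; rw [dif_pos h]; exact Nat.find_min' h hd

lemma extentWord_length (T : Transducer n) (q : T.Q) :
    (extentWord T q).length = extentLen T q := by simp [extentWord]

lemma extentWord_getElem (T : Transducer n) (q : T.Q) (i : ℕ)
    (h : i < (extentWord T q).length) :
    (extentWord T q)[i] = hmap T q (fun _ => default) i := by
  simp [extentWord]

end Extent

section RI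

variable {n : ℕ} {P : Transducer n}

lemma outs_getElem_eq_hmap (hsyn : Synchronous P) (w : Word n) (q : P.Q) (i : ℕ)
    (hi : i < (outs P w q).length) (x : ℕ → A n) :
    (outs P w q)[i] = hmap P q (prepend w x) i := by
  have hw : (List.range w.length).map (prepend w x) = w := by
    simpa using range_map_prepend w x 0
  have h1 : i < (outs P ((List.range w.length).map (prepend w x)) q).length := by
    rw [hw]; exact hi
  rw [hmap_eq P q (prepend w x) h1, hw, List.getD_eq_getElem _ _ hi]

lemma extentLen_le_add (hsyn : Synchronous P) (hfin : ∀ p, FiniteExtent P p)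
    (w : Word n) (q : P.Q) :
    extentLen P q ≤ w.length + extentLen P (dsts P w q) := by
  obtain ⟨x, y, hxy⟩ := disagree_extent P (dsts P w q) (hfin _)
  have hd : Disagree P q (extentLen P (dsts P w q) + w.length) :=
    ⟨prepend w x, prepend w y, by
      rw [comp_sync P hsyn, comp_sync P hsyn]; exact hxy⟩
  have := extentLen_le P q (hfin q) hd
  omega

lemma extentWord_prefix (hsyn : Synchronous P) (hfin : ∀ p, FiniteExtent P p)
    (w : Word n) (q : P.Q) :
    extentWord P q <+: outs P w q ++ extentWord P (dsts P w q) := by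
  have hle := extentLen_le_add hsyn hfin w q
  have heq : extentWord P q =
      (outs P w q ++ extentWord P (dsts P w q)).take (extentLen P q) := by
    apply List.ext_getElem
    · simp [extentWord_length, outs_length_sync P hsyn, List.length_take,
        List.length_append]; omega
    · intro i h1 h2
      rw [List.getElem_take]
      rw [extentWord_getElem]
      rw [extentWord_length] at h1
      by_cases hc : i < (outs P w q).length
      · rw [List.getElem_append_left hc]
        rw [outs_getElem_eq_hmap hsyn w q i hc (fun _ => default)]
        exact hmap_indep P q (hfin q) h1 _ _
      · rw [List.getElem_append_right (not_lt.mp hc)]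
        rw [extentWord_getElem]
        have hwl : (outs P w q).length = w.length := outs_length_sync P hsyn w q
        have hge : w.length ≤ i := hwl ▸ not_lt.mp hc
        have hcomp := comp_sync P hsyn w q (fun _ => default) (i - w.length)
        have hidx : i - w.length + w.length = i := by omega
        rw [hidx] at hcomp
        rw [hwl, ← hcomp]
        exact hmap_indep P q (hfin q) h1 _ _
  rw [heq]
  exact List.take_prefix _ _

lemma dsts_removeIncomplete (w : Word n) (q : P.Q) :
    dsts (removeIncomplete P) w q = dsts P w q := by
  induction w generalizing q with
  | nil => rfl
  | cons a w ih => exact ih (P.tr a q)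

lemma out_removeIncomplete (hfin : ∀ p, FiniteExtent P p) (a : A n) (q : P.Q) :
    (removeIncomplete P).out a q =
      (P.out a q ++ extentWord P (P.tr a q)).drop (extentLen P q) := by
  classical
  show (if ∀ p : P.Q, FiniteExtent P p then
      (P.out a q ++ extentWord P (P.tr a q)).drop (extentLen P q)
    else minimalRot (periodicRoot P)) = _
  rw [if_pos hfin]

lemma outs_removeIncomplete (hsyn : Synchronous P) (hfin : ∀ p, FiniteExtent P p)
    (w : Word n) (q : P.Q) :
    outs (removeIncomplete P) w q =
      (outs P w q ++ extentWord P (dsts P w q)).drop (extentLen P q) := by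
  induction w generalizing q with
  | nil =>
      show ([] : Word n) = _
      rw [show outs P [] q = ([] : Word n) from rfl, List.nil_append,
        show dsts P [] q = q from rfl]
      rw [← extentWord_length P q, List.drop_length]
  | cons a w ih =>
      have hstep : outs (removeIncomplete P) (a :: w) q =
          (removeIncomplete P).out a q ++ outs (removeIncomplete P) w (P.tr a q) := rfl
      rw [hstep, ih, out_removeIncomplete hfin]
      obtain ⟨r, hr⟩ := extentWord_prefix hsyn hfin w (P.tr a q)
      have hd : extentLen P q ≤ (P.out a q ++ extentWord P (P.tr a q)).length := by
        have h1 := extentLen_le_add hsyn hfin [a] q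
        simp only [List.length_append, extentWord_length, hsyn a q]
        simp [dsts] at h1
        omega
      have hdsts : dsts P (a :: w) q = dsts P w (P.tr a q) := rfl
      have houts : outs P (a :: w) q = P.out a q ++ outs P w (P.tr a q) := rfl
      rw [← hr, hdsts, houts, List.append_assoc, ← hr, ← List.append_assoc,
        List.drop_append_of_le_length hd]
      congr 1
      rw [← extentWord_length P (P.tr a q), List.drop_left]

lemma len_outs_removeIncomplete (hsyn : Synchronous P) (hfin : ∀ p, FiniteExtent P p)
    (w : Word n) (q : P.Q) :
    (outs (removeIncomplete P) w q).length + extentLen P q =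
      w.length + extentLen P (dsts P w q) := by
  rw [outs_removeIncomplete hsyn hfin, List.length_drop, List.length_append,
    extentWord_length, outs_length_sync P hsyn]
  have := extentLen_le_add hsyn hfin w q
  omega

lemma circuit_len (hsyn : Synchronous P) (hfin : ∀ p, FiniteExtent P p)
    (Γ : Word n) (p : P.Q) (h : dsts (removeIncomplete P) Γ p = p) :
    (outs (removeIncomplete P) Γ p).length = Γ.length := by
  rw [dsts_removeIncomplete] at h
  have := len_outs_removeIncomplete hsyn hfin Γ p
  rw [h] at this
  omega

end RI


section RI2

variable {n : ℕ} {P : Transducer n}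

lemma hmap_removeIncomplete (hsyn : Synchronous P) (hfin : ∀ p, FiniteExtent P p)
    (q : P.Q) (x : ℕ → A n) (m : ℕ) :
    hmap (removeIncomplete P) q x m = hmap P q x (extentLen P q + m) := by
  set k := m + extentLen P q + 1 with hk
  set W := (List.range k).map x with hW
  have hWl : W.length = k := by simp [hW]
  have hlen := len_outs_removeIncomplete hsyn hfin W q
  rw [hWl] at hlen
  have h1 : m < (outs (removeIncomplete P) W q).length := by omega
  have h2 : extentLen P q + m < (outs P W q).length := by
    rw [outs_length_sync P hsyn, hWl]; omega
  rw [hmap_eq (removeIncomplete P) q x (by rw [← hW]; exact h1),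
      hmap_eq P q x (k := k) (by rw [← hW]; exact h2)]
  rw [← hW, List.getD_eq_getElem _ _ h1, List.getD_eq_getElem _ _ h2]
  have hout := outs_removeIncomplete hsyn hfin W q
  have h1' : m < ((outs P W q ++ extentWord P (dsts P W q)).drop (extentLen P q)).length := by
    rw [← hout]; exact h1
  rw [List.getElem_of_eq hout h1, List.getElem_drop]
  rw [List.getElem_append_left h2]

lemma disagree_zero_removeIncomplete (hsyn : Synchronous P) (hfin : ∀ p, FiniteExtent P p)
    (q : P.Q) : Disagree (removeIncomplete P) q 0 := by
  obtain ⟨x, y, hxy⟩ := disagree_extent P q (hfin q)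
  refine ⟨x, y, ?_⟩
  rw [hmap_removeIncomplete hsyn hfin, hmap_removeIncomplete hsyn hfin]
  simpa using hxy

lemma out_ri_length (hsyn : Synchronous P) (hfin : ∀ p, FiniteExtent P p)
    (a : A n) (q : P.Q) :
    ((removeIncomplete P).out a q).length + extentLen P q =
      1 + extentLen P (P.tr a q) := by
  have h := len_outs_removeIncomplete hsyn hfin [a] q
  simpa [outs, dsts] using h

lemma hmap_ri_cons (hsyn : Synchronous P) (hfin : ∀ p, FiniteExtent P p)
    (a : A n) (p : P.Q) (y : ℕ → A n) (m : ℕ) :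
    hmap (removeIncomplete P) p (prepend [a] y)
        (m + ((removeIncomplete P).out a p).length)
      = hmap (removeIncomplete P) (P.tr a p) y m := by
  have hL := out_ri_length hsyn hfin a p
  rw [hmap_removeIncomplete hsyn hfin, hmap_removeIncomplete hsyn hfin]
  have hcomp := comp_sync P hsyn [a] p y (extentLen P (P.tr a p) + m)
  have hda : dsts P [a] p = P.tr a p := rfl
  rw [hda] at hcomp
  have hidx : extentLen P p + (m + ((removeIncomplete P).out a p).length) =
      extentLen P (P.tr a p) + m + ([a] : Word n).length := by simp; omega
  rw [hidx, hcomp]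

lemma out_ri_getElem (hsyn : Synchronous P) (hfin : ∀ p, FiniteExtent P p)
    (a : A n) (p : P.Q) (j : ℕ)
    (hj : j < ((removeIncomplete P).out a p).length) (y : ℕ → A n) :
    ((removeIncomplete P).out a p)[j] =
      hmap (removeIncomplete P) p (prepend [a] y) j := by
  rw [hmap_removeIncomplete hsyn hfin]
  have hout := out_removeIncomplete hfin a p
  have hj' : j < ((P.out a p ++ extentWord P (P.tr a p)).drop (extentLen P p)).length := by
    rw [← hout]; exact hj
  rw [List.getElem_of_eq hout hj, List.getElem_drop]
  have hLb : extentLen P p + j < 1 + extentLen P (P.tr a p) := by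
    have h := out_ri_length hsyn hfin a p; omega
  by_cases hc : extentLen P p + j < (P.out a p).length
  · rw [List.getElem_append_left hc]
    have hout1 : outs P [a] p = P.out a p := by simp [outs]
    have hc' : extentLen P p + j < (outs P [a] p).length := by rw [hout1]; exact hc
    have h := outs_getElem_eq_hmap hsyn [a] p _ hc' y
    exact (List.getElem_of_eq hout1 hc').symm.trans h
  · rw [List.getElem_append_right (not_lt.mp hc)]
    rw [extentWord_getElem]
    have hsl : (P.out a p).length = 1 := hsyn a p
    have hcomp := comp_sync P hsyn [a] p y (extentLen P p + j - 1)
    have hda : dsts P [a] p = P.tr a p := rfl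
    rw [hda] at hcomp
    have hidx : extentLen P p + j - 1 + ([a] : Word n).length = extentLen P p + j := by
      simp; omega
    rw [hidx] at hcomp
    rw [hsl, hcomp]
    exact hmap_indep P (P.tr a p) (hfin _) (by omega) _ _

lemma ri_respects (hsyn : Synchronous P) (hfin : ∀ p, FiniteExtent P p)
    (p q : P.Q)
    (h : hmap (removeIncomplete P) p = hmap (removeIncomplete P) q) (a : A n) :
    (removeIncomplete P).out a p = (removeIncomplete P).out a q ∧
      hmap (removeIncomplete P) (P.tr a p) = hmap (removeIncomplete P) (P.tr a q) := by
  have key : ∀ p q : P.Q, hmap (removeIncomplete P) p = hmap (removeIncomplete P) q →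
      ((removeIncomplete P).out a p).length < ((removeIncomplete P).out a q).length →
      False := by
    intro p q h hlt
    obtain ⟨x, y, hxy⟩ := disagree_zero_removeIncomplete hsyn hfin (P.tr a p)
    apply hxy
    have hx := hmap_ri_cons hsyn hfin a p x 0
    have hy := hmap_ri_cons hsyn hfin a p y 0
    rw [zero_add] at hx hy
    rw [← hx, ← hy, h]
    rw [← out_ri_getElem hsyn hfin a q _ hlt x, ← out_ri_getElem hsyn hfin a q _ hlt y]
  have hle : ((removeIncomplete P).out a p).length =
      ((removeIncomplete P).out a q).length := by
    rcases lt_trichotomy ((removeIncomplete P).out a p).length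
      ((removeIncomplete P).out a q).length with hc | hc | hc
    · exact absurd (key p q h hc) (fun f => f)
    · exact hc
    · exact absurd (key q p h.symm hc) (fun f => f)
  constructor
  · apply List.ext_getElem hle
    intro i h1 h2
    rw [out_ri_getElem hsyn hfin a p i h1 (fun _ => default),
        out_ri_getElem hsyn hfin a q i h2 (fun _ => default), h]
  · funext y m
    have hp := hmap_ri_cons hsyn hfin a p y m
    have hq := hmap_ri_cons hsyn hfin a q y m
    rw [← hp, ← hq, h, hle]

end RI2


section CoreQuot

variable {n : ℕ}

lemma coreT_tr (T : Transducer n) (hall : ∀ q, CoreStateE T q) (a : A n)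
    (s : (coreT T).Q) : (coreT T).tr a s = ⟨T.tr a s.1, hall _⟩ := by
  classical
  show (if h : CoreStateE T (T.tr a s.1) then (⟨T.tr a s.1, h⟩ : (coreT T).Q) else s) = _
  exact dif_pos (hall _)

lemma coreT_dsts (T : Transducer n) (hall : ∀ q, CoreStateE T q) (w : Word n)
    (s : (coreT T).Q) : dsts (coreT T) w s = ⟨dsts T w s.1, hall _⟩ := by
  induction w generalizing s with
  | nil => rfl
  | cons a w ih =>
      exact (congrArg (dsts (coreT T) w) (coreT_tr T hall a s)).trans (ih _)

lemma coreT_outs (T : Transducer n) (hall : ∀ q, CoreStateE T q) (w : Word n)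
    (s : (coreT T).Q) : outs (coreT T) w s = outs T w s.1 := by
  induction w generalizing s with
  | nil => rfl
  | cons a w ih =>
      exact congrArg (T.out a s.1 ++ ·)
        ((congrArg (outs (coreT T) w) (coreT_tr T hall a s)).trans (ih _))

lemma coreT_hmap (T : Transducer n) (hall : ∀ q, CoreStateE T q) (s : (coreT T).Q) :
    hmap (coreT T) s = hmap T s.1 :=
  hmap_congr _ _ _ _ (fun w => coreT_outs T hall w s)

lemma quot_mk_eq_iff (C : Transducer n) (p q : C.Q) :
    Quotient.mk (omegaSetoid C) p = Quotient.mk (omegaSetoid C) q ↔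
      hmap C p = hmap C q := by
  constructor
  · intro h
    have h2 := congrArg (Quotient.lift (hmap C) (fun a b hab => hab)) h
    exact h2
  · intro h
    exact Quotient.sound h

lemma quot_out_mk (C : Transducer n) (q : C.Q) :
    hmap C (Quotient.mk (omegaSetoid C) q).out = hmap C q :=
  (quot_mk_eq_iff C _ q).1 (Quotient.out_eq _)

variable {C : Transducer n}

def Resp (C : Transducer n) : Prop :=
  ∀ p q : C.Q, hmap C p = hmap C q → ∀ a : A n,
    C.out a p = C.out a q ∧ hmap C (C.tr a p) = hmap C (C.tr a q)

lemma quotT_out (hresp : Resp C) (a : A n) (q : C.Q) :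
    (quotT C).out a (Quotient.mk (omegaSetoid C) q) = C.out a q :=
  (hresp _ _ (quot_out_mk C q) a).1

lemma quotT_tr (hresp : Resp C) (a : A n) (q : C.Q) :
    (quotT C).tr a (Quotient.mk (omegaSetoid C) q) =
      Quotient.mk (omegaSetoid C) (C.tr a q) :=
  (quot_mk_eq_iff C _ _).2 ((hresp _ _ (quot_out_mk C q) a).2)

lemma quotT_dsts (hresp : Resp C) (w : Word n) (q : C.Q) :
    dsts (quotT C) w (Quotient.mk (omegaSetoid C) q) =
      Quotient.mk (omegaSetoid C) (dsts C w q) := by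
  induction w generalizing q with
  | nil => rfl
  | cons a w ih =>
      rw [show dsts (quotT C) (a :: w) (Quotient.mk (omegaSetoid C) q) =
        dsts (quotT C) w ((quotT C).tr a (Quotient.mk (omegaSetoid C) q)) from rfl,
        quotT_tr hresp, ih]
      rfl

lemma quotT_outs (hresp : Resp C) (w : Word n) (q : C.Q) :
    outs (quotT C) w (Quotient.mk (omegaSetoid C) q) = outs C w q := by
  induction w generalizing q with
  | nil => rfl
  | cons a w ih =>
      rw [show outs (quotT C) (a :: w) (Quotient.mk (omegaSetoid C) q) =
        (quotT C).out a (Quotient.mk (omegaSetoid C) q) ++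
          outs (quotT C) w ((quotT C).tr a (Quotient.mk (omegaSetoid C) q)) from rfl,
        quotT_tr hresp, quotT_out hresp, ih]
      rfl

lemma quotT_hmap (hresp : Resp C) (q : C.Q) :
    hmap (quotT C) (Quotient.mk (omegaSetoid C) q) = hmap C q :=
  hmap_congr _ _ _ _ (fun w => quotT_outs hresp w q)

end CoreQuot


section SL3Quot

variable {n : ℕ}

lemma flatten_replicate_length (m : ℕ) (Γ : Word n) :
    ((List.replicate m Γ).flatten).length = m * Γ.length := by
  induction m with
  | zero => simp
  | succ m ih => rw [List.replicate_succ, List.flatten_cons, List.length_append, ih]; ring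

lemma circuitsNonempty_of_sl3 (T : Transducer n) (h : SL3 T) : CircuitsNonempty T := by
  intro q w hw hc hnil
  have h2 := h q w hc
  rw [hnil] at h2
  exact hw (List.eq_nil_of_length_eq_zero h2.symm)

lemma quot_weaklyMinimal (C : Transducer n) (hresp : Resp C) :
    WeaklyMinimal (quotT C) := by
  intro c c' h
  rw [← Quotient.out_eq c, ← Quotient.out_eq c'] at h ⊢
  rw [quotT_hmap hresp, quotT_hmap hresp] at h
  exact (quot_mk_eq_iff C _ _).2 h

lemma quot_noIncomplete (C : Transducer n) (hresp : Resp C)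
    (hni : ∀ q : C.Q, Disagree C q 0) : NoIncomplete (quotT C) := by
  intro c
  obtain ⟨x, y, hxy⟩ := hni c.out
  refine ⟨x, y, ?_⟩
  rw [← Quotient.out_eq c, quotT_hmap hresp]
  exact hxy

lemma quot_sl3 (C : Transducer n) (hresp : Resp C)
    (hcir : ∀ (q : C.Q) (Γ : Word n), dsts C Γ q = q →
      (outs C Γ q).length = Γ.length) :
    SL3 (quotT C) := by
  intro c Γ hΓ
  obtain ⟨s, rfl⟩ : ∃ s, Quotient.mk (omegaSetoid C) s = c := ⟨c.out, Quotient.out_eq c⟩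
  rcases Nat.eq_zero_or_pos Γ.length with h0 | hpos
  · rw [List.length_eq_zero_iff] at h0; subst h0; rfl
  have hmkt : ∀ t : ℕ, Quotient.mk (omegaSetoid C) ((fun r => dsts C Γ r)^[t] s)
      = Quotient.mk (omegaSetoid C) s := by
    intro t
    induction t with
    | zero => rfl
    | succ t ih =>
        rw [Function.iterate_succ_apply', ← quotT_dsts hresp, ih, hΓ]
  have hlen : ∀ t, (outs C Γ ((fun r => dsts C Γ r)^[t] s)).length
      = (outs C Γ s).length := by
    intro t
    conv_lhs => rw [← quotT_outs hresp Γ ((fun r => dsts C Γ r)^[t] s)]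
    rw [hmkt t, quotT_outs hresp]
  have hWd : ∀ (m t : ℕ), dsts C ((List.replicate m Γ).flatten)
      ((fun r => dsts C Γ r)^[t] s) = (fun r => dsts C Γ r)^[t + m] s := by
    intro m
    induction m with
    | zero => intro t; rfl
    | succ m ih =>
        intro t
        rw [List.replicate_succ, List.flatten_cons, dsts_append]
        have h1 : dsts C Γ ((fun r => dsts C Γ r)^[t] s) =
            (fun r => dsts C Γ r)^[t + 1] s := by
          rw [Function.iterate_succ_apply']
        rw [h1, ih (t + 1)]
        congr 1
        omega
  have hWo : ∀ (m t : ℕ), (outs C ((List.replicate m Γ).flatten)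
      ((fun r => dsts C Γ r)^[t] s)).length = m * (outs C Γ s).length := by
    intro m
    induction m with
    | zero => intro t; simp [outs]
    | succ m ih =>
        intro t
        rw [List.replicate_succ, List.flatten_cons, outs_append, List.length_append]
        have h1 : dsts C Γ ((fun r => dsts C Γ r)^[t] s) =
            (fun r => dsts C Γ r)^[t + 1] s := by
          rw [Function.iterate_succ_apply']
        rw [h1, ih (t + 1), hlen t]
        ring
  have hij : ∃ i j, i < j ∧ (fun r => dsts C Γ r)^[i] s = (fun r => dsts C Γ r)^[j] s := by
    obtain ⟨t1, t2, hne, heq⟩ := Finite.exists_ne_map_eq_of_infinite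
      (fun t : ℕ => (fun r => dsts C Γ r)^[t] s)
    rcases Nat.lt_or_gt_of_ne hne with h | h
    · exact ⟨t1, t2, h, heq⟩
    · exact ⟨t2, t1, h, heq.symm⟩
  obtain ⟨i, j, hij, hfix⟩ := hij
  have hcirc : dsts C ((List.replicate (j - i) Γ).flatten) ((fun r => dsts C Γ r)^[i] s)
      = (fun r => dsts C Γ r)^[i] s := by
    rw [hWd (j - i) i]
    rw [show i + (j - i) = j by omega]
    exact hfix.symm
  have h2 := hcir _ _ hcirc
  rw [hWo (j - i) i, flatten_replicate_length] at h2
  have h3 : (outs C Γ s).length = Γ.length := by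
    have hji : 0 < j - i := by omega
    exact Nat.eq_of_mul_eq_mul_left hji h2
  rw [quotT_outs hresp]
  exact h3

end SL3Quot

section CaseB

lemma caseB {n : ℕ} (P : Transducer n) (hP : PtildeMem P)
    (hfin : ∀ q, FiniteExtent P q) : SLnMem (minRep P) := by
  obtain ⟨hcne, hss, hcore, hsyn, hwm⟩ := hP
  have hall : ∀ q : (removeIncomplete P).Q, CoreStateE (removeIncomplete P) q := by
    intro q
    obtain ⟨k, w, hs, hl, hf⟩ := hcore q
    refine Or.inl ⟨k, w, ?_, hl, ?_⟩
    · intro w' hw' p r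
      exact (dsts_removeIncomplete (P := P) w' p).trans
        ((hs w' hw' p r).trans (dsts_removeIncomplete (P := P) w' r).symm)
    · intro p
      exact (dsts_removeIncomplete (P := P) w p).trans (hf p)
  have respC : Resp (coreT (removeIncomplete P)) := by
    intro p q h a
    rw [coreT_hmap _ hall, coreT_hmap _ hall] at h
    have h2 := ri_respects hsyn hfin p.1 q.1 h a
    refine ⟨h2.1, ?_⟩
    rw [coreT_tr _ hall, coreT_tr _ hall]
    exact (coreT_hmap _ hall _).trans
      (h2.2.trans (coreT_hmap (removeIncomplete P) hall ⟨P.tr a q.1, hall _⟩).symm)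
  have hcirC : ∀ (q : (coreT (removeIncomplete P)).Q) (Γ : Word n),
      dsts (coreT (removeIncomplete P)) Γ q = q →
      (outs (coreT (removeIncomplete P)) Γ q).length = Γ.length := by
    intro q Γ h
    rw [coreT_outs _ hall]
    rw [coreT_dsts _ hall] at h
    have h1 : dsts (removeIncomplete P) Γ q.1 = q.1 := congrArg Subtype.val h
    exact circuit_len hsyn hfin Γ q.1 h1
  have hsl3 : SL3 (minRep P) := quot_sl3 _ respC hcirC
  have hdq : ∀ (w : Word n) (c : (minRep P).Q),
      dsts (minRep P) w c =
        Quotient.mk (omegaSetoid (coreT (removeIncomplete P)))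
          ⟨dsts P w c.out.1, hall _⟩ := by
    intro w c
    conv_lhs => rw [← Quotient.out_eq c]
    show dsts (quotT (coreT (removeIncomplete P))) w _ = _
    rw [quotT_dsts respC, coreT_dsts _ hall]
    congr 1
    apply Subtype.ext
    show dsts (removeIncomplete P) w _ = _
    exact dsts_removeIncomplete w _
  have hsync : ∀ k, SyncAt P k → SyncAt (minRep P) k := by
    intro k hs w hw c c'
    rw [hdq w c, hdq w c']
    exact congrArg _ (Subtype.ext (hs w hw _ _))
  refine ⟨⟨circuitsNonempty_of_sl3 _ hsl3, ?_, ?_, Or.inl ⟨?_, ?_⟩⟩, hsl3⟩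
  · obtain ⟨k, hs⟩ := hss
    exact ⟨k, hsync k hs⟩
  · intro c
    obtain ⟨k, w, hsk, hl, hf⟩ := hcore c.out.1
    refine ⟨k, w, hsync k hsk, hl, ?_⟩
    intro p
    rw [hdq w p]
    conv_rhs => rw [← Quotient.out_eq c]
    exact congrArg _ (Subtype.ext (hf _))
  · apply quot_noIncomplete _ respC
    intro q
    obtain ⟨x, y, hxy⟩ := disagree_zero_removeIncomplete hsyn hfin q.1
    exact ⟨x, y, by rw [coreT_hmap _ hall]; exact hxy⟩
  · exact quot_weaklyMinimal _ respC

end CaseB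


section CaseA

variable {n : ℕ}

lemma outs_const_eq (T U : Transducer n) (c : Word n)
    (hT : ∀ a q, T.out a q = c) (hU : ∀ a q, U.out a q = c) :
    ∀ (w : Word n) (q : T.Q) (q' : U.Q), outs T w q = outs U w q' := by
  intro w
  induction w with
  | nil => intro q q'; rfl
  | cons a w ih =>
      intro q q'
      show T.out a q ++ _ = U.out a q' ++ _
      rw [hT, hU, ih]

lemma per_iter (g : ℕ → A n) (d : ℕ) (h : ∀ j, g (j + d) = g j) :
    ∀ j t, g (j + t * d) = g j := by
  intro j t
  induction t with
  | zero => simp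
  | succ t ih =>
      rw [show j + (t + 1) * d = j + t * d + d by ring, h, ih]

lemma flatten_replicate_nil (k : ℕ) : ((List.replicate k ([] : Word n)).flatten) = [] := by
  induction k with
  | zero => rfl
  | succ k ih => rw [List.replicate_succ, List.flatten_cons, List.nil_append, ih]

lemma caseA (P : Transducer n) (hP : PtildeMem P)
    (hnf : ¬ ∀ q, FiniteExtent P q) : SLnMem (minRep P) := by
  obtain ⟨hcne, hss, hcore, hsyn, hwm⟩ := hP
  have hnf2 := hnf
  push_neg at hnf2
  obtain ⟨q0, hq0⟩ := hnf2
  have hq0' : ∀ (j : ℕ) (x y : ℕ → A n), hmap P q0 x j = hmap P q0 y j := by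
    intro j x y
    by_contra h
    exact hq0 ⟨j, x, y, h⟩
  have hconst : ∀ (p : P.Q) (j : ℕ) (x y : ℕ → A n), hmap P p x j = hmap P p y j := by
    intro p j x y
    obtain ⟨k, w, hs, hl, hf⟩ := hcore p
    have h1 := comp_sync P hsyn w q0 x j
    have h2 := comp_sync P hsyn w q0 y j
    rw [hf q0] at h1 h2
    rw [← h1, ← h2]
    exact hq0' _ _ _
  haveI hsub : Subsingleton P.Q := by
    constructor
    intro p p'
    obtain ⟨k1, w1, hs1, hl1, hf1⟩ := hcore p
    obtain ⟨k2, w2, hs2, hl2, hf2⟩ := hcore p'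
    by_cases hw1 : w1.length = 0
    · have hnil : w1 = [] := List.eq_nil_of_length_eq_zero hw1
      subst hnil
      exact (hf1 p').symm
    by_cases hw2 : w2.length = 0
    · have hnil : w2 = [] := List.eq_nil_of_length_eq_zero hw2
      subst hnil
      exact hf2 p
    apply hwm
    set g : ℕ → A n := fun j => hmap P p (fun _ => default) j with hgdef
    set g' : ℕ → A n := fun j => hmap P p' (fun _ => default) j with hgdef'
    have hg1 : ∀ j, g (j + w1.length) = g j := by
      intro j
      have h1 := comp_sync P hsyn w1 p (fun _ => default) j
      rw [hf1 p] at h1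
      exact (hconst p (j + w1.length) _ _).trans h1
    have hgg' : ∀ j, g' (j + w1.length) = g j := by
      intro j
      have h1 := comp_sync P hsyn w1 p' (fun _ => default) j
      rw [hf1 p'] at h1
      exact (hconst p' (j + w1.length) _ _).trans h1
    have hg2 : ∀ j, g' (j + w2.length) = g' j := by
      intro j
      have h1 := comp_sync P hsyn w2 p' (fun _ => default) j
      rw [hf2 p'] at h1
      exact (hconst p' (j + w2.length) _ _).trans h1
    have hagree : ∀ i, g (i + w1.length) = g' (i + w1.length) := fun i =>
      (hg1 i).trans (hgg' i).symm
    funext x j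
    have hmul : w1.length ≤ w2.length * w1.length :=
      Nat.le_mul_of_pos_left _ (by omega)
    have e1 : g (j + w2.length * w1.length) = g j := per_iter g w1.length hg1 j w2.length
    have e2 : g' (j + w2.length * w1.length) = g' j := by
      rw [Nat.mul_comm]
      exact per_iter g' w2.length hg2 j w1.length
    have e3 : g (j + w2.length * w1.length) = g' (j + w2.length * w1.length) := by
      have h4 := hagree (j + w2.length * w1.length - w1.length)
      rw [show j + w2.length * w1.length - w1.length + w1.length
        = j + w2.length * w1.length by omega] at h4
      exact h4
    calc hmap P p x j = g j := hconst p j x _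
      _ = g' j := by rw [← e1, e3, e2]
      _ = hmap P p' x j := hconst p' j _ x
  set c : A n := hmap P (Classical.choice P.ne) (fun _ => default) 0 with hcdef
  have hout : ∀ (a : A n) (q : P.Q), P.out a q = [c] := by
    intro a q
    have hlen1 : (P.out a q).length = 1 := hsyn a q
    have houts1 : outs P [a] q = P.out a q := by simp [outs]
    have h0 : 0 < (outs P [a] q).length := by rw [houts1, hlen1]; omega
    have h2 : ((List.range 1).map (prepend [a] fun _ => default)) = [a] := by
      simpa using range_map_prepend [a] (fun _ => default) 0
    have h1 := hmap_eq P q (prepend [a] fun _ => default) (k := 1) (by rw [h2]; exact h0)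
    rw [h2] at h1
    obtain ⟨b, hb⟩ := List.length_eq_one_iff.mp hlen1
    rw [hb]
    congr 1
    have h5 : (outs P [a] q).getD 0 default = b := by
      rw [houts1, hb]; rfl
    rw [← h5, ← h1, hcdef]
    have h6 : q = Classical.choice P.ne := Subsingleton.elim _ _
    rw [← h6]
    exact (hconst q 0 _ _)
  have houtsrep : ∀ (w : Word n) (q : P.Q), outs P w q = List.replicate w.length c := by
    intro w
    induction w with
    | nil => intro q; rfl
    | cons a w ih =>
        intro q
        show P.out a q ++ outs P w (P.tr a q) = _
        rw [hout, ih, show (a :: w).length = w.length + 1 from rfl, List.replicate_succ]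
        rfl
  have hmapc : ∀ (q : P.Q) (x : ℕ → A n) (j : ℕ), hmap P q x j = c := by
    intro q x j
    have hk : j < (outs P ((List.range (j+1)).map x) q).length := by
      rw [outs_length_sync P hsyn]; simp
    rw [hmap_eq P q x hk, houtsrep]
    have hj : j < (List.replicate (((List.range (j+1)).map x)).length c).length := by simp
    rw [List.getD_eq_getElem _ _ hj, List.getElem_replicate]
  have hper : ∃ m, 0 < m ∧ ∀ j, hmap P (Classical.choice P.ne) (fun _ => default) (j + m)
      = hmap P (Classical.choice P.ne) (fun _ => default) j :=
    ⟨1, one_pos, fun j => by rw [hmapc, hmapc]⟩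
  have hroot : periodicRoot P = [c] := by
    classical
    unfold periodicRoot
    rw [dif_pos hper]
    have hfind : Nat.find hper = 1 := by
      rw [Nat.find_eq_iff]
      refine ⟨⟨one_pos, fun j => by rw [hmapc, hmapc]⟩, ?_⟩
      intro m hm hcon
      omega
    rw [hfind]
    simp [List.range_succ, hmapc]
  have hrot : minimalRot ([c] : Word n) = [c] := by
    simp [minimalRot, List.rotate_zero]
  have hri_out : ∀ (a : A n) (q : P.Q), (removeIncomplete P).out a q = [c] := by
    intro a q
    classical
    show (if ∀ p : P.Q, FiniteExtent P p then
        (P.out a q ++ extentWord P (P.tr a q)).drop (extentLen P q)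
      else minimalRot (periodicRoot P)) = _
    rw [if_neg hnf, hroot, hrot]
  haveI hsubri : Subsingleton (removeIncomplete P).Q := hsub
  haveI hsubC : Subsingleton (coreT (removeIncomplete P)).Q :=
    ⟨fun a b => Subtype.ext (Subsingleton.elim _ _)⟩
  haveI hsubM : Subsingleton (minRep P).Q := by
    constructor
    intro a b
    rw [← Quotient.out_eq a, ← Quotient.out_eq b]
    exact congrArg _ (Subsingleton.elim _ _)
  have hMout : ∀ (a : A n) (s : (minRep P).Q), (minRep P).out a s = [c] := by
    intro a s
    show (removeIncomplete P).out a s.out.1 = [c]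
    exact hri_out a _
  have hMsyn : Synchronous (minRep P) := fun a s => by rw [hMout]; rfl
  have hsl3 : SL3 (minRep P) := fun s Γ _ => outs_length_sync _ hMsyn Γ s
  refine ⟨⟨circuitsNonempty_of_sl3 _ hsl3, ⟨0, fun w hw p q => Subsingleton.elim _ _⟩,
    ?_, Or.inr ⟨[c], ⟨by simp, ?_⟩, hrot, ?_⟩⟩, hsl3⟩
  · intro s
    exact ⟨0, [], fun w hw p q => Subsingleton.elim _ _, rfl, fun p => Subsingleton.elim _ _⟩
  · intro u k hk
    rcases u with _ | ⟨b, u⟩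
    · rw [flatten_replicate_nil] at hk
      simp at hk
    · simp
  · refine ⟨⟨fun _ => PUnit.unit, fun _ => Classical.choice (minRep P).ne,
      fun s => Subsingleton.elim _ _, fun _ => rfl⟩, ?_⟩
    intro s
    exact hmap_congr _ _ _ _
      (fun w => outs_const_eq (minRep P) (Zword [c]) [c] hMout (fun _ _ => rfl) w s PUnit.unit)

end CaseA

/-- For every `P ∈ \widetilde{P}_n`, the minimal representative `[P]`
of `P` satisfies the Lipschitz condition SL3, i.e. `[P] ∈ SL_n`.  In particular, if every
state of `P` has finite extent of incomplete response and `P'` denotes the transducer with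
the same states and transitions as `P` but outputs `λ'(a,q) = Λ(a,q) - Λ(ε,q)` (this is
`removeIncomplete P`), then for every state `p` and word `Γ` with `π_{P'}(Γ, p) = p` one
has `|λ'_{P'}(Γ, p)| = |Γ|`. -/
theorem minRep_of_Ptilde_mem_SLn (n : ℕ) (P : Transducer n) (hP : PtildeMem P) :
    SLnMem (minRep P) ∧
      ((∀ q : P.Q, FiniteExtent P q) →
        ∀ (p : P.Q) (Γ : Word n),
          dsts (removeIncomplete P) Γ p = p →
            (outs (removeIncomplete P) Γ p).length = Γ.length) := by
  constructor
  · by_cases hfin : ∀ q, FiniteExtent P q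
    · exact caseB P hP hfin
    · exact caseA P hP hfin
  · intro hfin p Γ h
    exact circuit_len hP.2.2.2.1 hfin Γ p h

end ShiftPaper
end

section
/- Let φ : X_n^ℤ → X_n^ℤ be a continuous map commuting with the shift σ_n. If φ is injective on the set of σ_n-periodic points (the points x with σ_n^k(x) = x for some k ≥ 1), then φ is a homeomorphism, i.e. an automorphism of the shift dynamical system. -/
/-!
Common definitions: transducers over a finite alphabet, strong synchronization,
cores, ω-equivalence, minimal representatives, the monoids `M_n`, `SL_n`, `SO_n`,
the groups `O_n`, `L_n`, annotations, and the two-sided full shift.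

Throughout, the alphabet is `Fin (n + 2)`, i.e. an alphabet of size `n + 2 ≥ 2`.
-/

namespace ShiftPaper

variable {n : ℕ}

section Aux

variable {n : ℕ}

lemma shiftZ_add (i k : ℤ) (x : FullShift n) : shiftZ i (shiftZ k x) = shiftZ (i + k) x := by
  funext j; simp [shiftZ, sub_sub]

lemma shiftZ_zero (x : FullShift n) : shiftZ 0 x = x := by
  funext j; simp [shiftZ]

lemma comm_int (f : FullShift n → FullShift n)
    (hcomm : ∀ x, f (shiftZ 1 x) = shiftZ 1 (f x)) :
    ∀ (m : ℤ) (x), f (shiftZ m x) = shiftZ m (f x) := by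
  have hneg : ∀ x, f (shiftZ (-1) x) = shiftZ (-1) (f x) := by
    intro x
    have h1 : shiftZ 1 (shiftZ (-1) x) = x := by rw [shiftZ_add]; norm_num; exact shiftZ_zero x
    have := hcomm (shiftZ (-1) x)
    rw [h1] at this
    have := congrArg (shiftZ (-1)) this
    rw [shiftZ_add] at this
    norm_num at this
    rw [shiftZ_zero] at this
    exact this.symm
  intro m
  induction m using Int.induction_on with
  | zero => intro x; rw [shiftZ_zero, shiftZ_zero]
  | succ k ih =>
    intro x
    have : shiftZ ((k : ℤ) + 1) x = shiftZ 1 (shiftZ k x) := by rw [shiftZ_add, add_comm]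
    rw [this, hcomm, ih, shiftZ_add, add_comm]
  | pred k ih =>
    intro x
    have : shiftZ (-(k : ℤ) - 1) x = shiftZ (-1) (shiftZ (-k) x) := by
      rw [shiftZ_add]; ring_nf
    rw [this, hneg, ih, shiftZ_add]; ring_nf




lemma exists_radius (f : FullShift n → FullShift n) (hc : Continuous f) :
    ∃ r : ℕ, ∀ x y : FullShift n, (∀ t : ℤ, |t| ≤ (r : ℤ) → x t = y t) → f x 0 = f y 0 := by
  classical
  have hloc : ∀ x : FullShift n, ∃ r : ℕ,
      ∀ y, (∀ t : ℤ, |t| ≤ (r : ℤ) → y t = x t) → f y 0 = f x 0 := by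
    intro x
    have hg : Continuous fun z : FullShift n => f z 0 := (continuous_apply (0 : ℤ)).comp hc
    have hopen : {y | f y 0 = f x 0} ∈ nhds x := by
      have ho : IsOpen {y | f y 0 = f x 0} := by
        have : {y | f y 0 = f x 0} = (fun z => f z 0) ⁻¹' {f x 0} := rfl
        rw [this]
        exact (isOpen_discrete _).preimage hg
      exact ho.mem_nhds rfl
    rw [nhds_pi, Filter.mem_pi] at hopen
    obtain ⟨I, hIfin, t, ht, hsub⟩ := hopen
    obtain ⟨r, hr⟩ : ∃ r : ℕ, ∀ i ∈ I, |i| ≤ (r : ℤ) := by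
      obtain ⟨F, hF⟩ := hIfin.exists_finset_coe
      refine ⟨F.sup (fun i => i.natAbs), fun i hi => ?_⟩
      have : i ∈ F := by rw [← hF] at hi; exact_mod_cast hi
      have := Finset.le_sup (f := fun i : ℤ => i.natAbs) this
      rw [Int.abs_eq_natAbs]
      exact_mod_cast this
    refine ⟨r, fun y hy => ?_⟩
    apply hsub
    rw [Set.mem_pi]
    intro i hi
    have h1 : y i = x i := hy i (hr i hi)
    rw [h1]
    have := ht i
    rwa [mem_nhds_discrete] at this
  choose rho hrho using hloc
  have hopen : ∀ x : FullShift n, IsOpen {y : FullShift n | ∀ t : ℤ, |t| ≤ (rho x : ℤ) → y t = x t} := by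
    intro x
    have : {y : FullShift n | ∀ t : ℤ, |t| ≤ (rho x : ℤ) → y t = x t} =
        ⋂ t ∈ Finset.Icc (-(rho x : ℤ)) (rho x : ℤ), (fun y : FullShift n => y t) ⁻¹' {x t} := by
      ext y
      simp only [Set.mem_setOf_eq, Set.mem_iInter, Set.mem_preimage, Set.mem_singleton_iff,
        Finset.mem_Icc]
      constructor
      · intro h t ht; exact h t (abs_le.mpr ht)
      · intro h t ht; exact h t (abs_le.mp ht)
    rw [this]
    exact isOpen_biInter_finset fun t _ => (isOpen_discrete _).preimage (continuous_apply t)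
  have hcov : (Set.univ : Set (FullShift n)) ⊆
      ⋃ x : FullShift n, {y : FullShift n | ∀ t : ℤ, |t| ≤ (rho x : ℤ) → y t = x t} := by
    intro x _
    exact Set.mem_iUnion.mpr ⟨x, fun t _ => rfl⟩
  obtain ⟨F, hF⟩ := IsCompact.elim_finite_subcover isCompact_univ _ hopen hcov
  refine ⟨F.sup rho, fun x y hxy => ?_⟩
  have hx := hF (Set.mem_univ x)
  rw [Set.mem_iUnion₂] at hx
  obtain ⟨x₀, hx₀F, hx₀⟩ := hx
  have hle : (rho x₀ : ℤ) ≤ ((F.sup rho : ℕ) : ℤ) := by exact_mod_cast Finset.le_sup (f := rho) hx₀F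
  have hy : ∀ t : ℤ, |t| ≤ (rho x₀ : ℤ) → y t = x₀ t := by
    intro t ht
    rw [← hxy t (le_trans ht hle)]
    exact hx₀ t ht
  rw [hrho x₀ x hx₀, hrho x₀ y hy]




lemma window_det (f : FullShift n → FullShift n)
    (hm : ∀ (m : ℤ) (x), f (shiftZ m x) = shiftZ m (f x)) (r : ℕ)
    (hr : ∀ x y : FullShift n, (∀ t : ℤ, |t| ≤ (r : ℤ) → x t = y t) → f x 0 = f y 0)
    (x y : FullShift n) (p q : ℤ)
    (h : ∀ t : ℤ, |t| ≤ (r : ℤ) → x (p + t) = y (q + t)) : f x p = f y q := by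
  have e1 : f x p = f (shiftZ (-p) x) 0 := by
    rw [hm]; show f x p = f x (0 - -p); norm_num
  have e2 : f y q = f (shiftZ (-q) y) 0 := by
    rw [hm]; show f y q = f y (0 - -q); norm_num
  rw [e1, e2]
  apply hr
  intro t ht
  show x (t - -p) = y (t - -q)
  have := h t ht
  have hxp : t - -p = p + t := by ring
  have hyq : t - -q = q + t := by ring
  rw [hxp, hyq]; exact this

noncomputable def perExt (x : FullShift n) (e P : ℤ) : FullShift n :=
  fun i => x (e + (i - e) % P)

lemma perExt_eq_self (x : FullShift n) (e P i : ℤ) (h1 : e ≤ i) (h2 : i < e + P) :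
    perExt x e P i = x i := by
  unfold perExt
  rw [Int.emod_eq_of_lt (by omega) (by omega)]
  congr 1; omega

lemma iterate_shift (k : ℕ) (x : FullShift n) :
    (fun y : FullShift n => shiftZ 1 y)^[k] x = shiftZ (k : ℤ) x := by
  induction k with
  | zero => rw [Function.iterate_zero_apply]; exact (shiftZ_zero x).symm
  | succ k ih =>
    rw [Function.iterate_succ_apply', ih, shiftZ_add]
    congr 1; push_cast; ring

lemma perExt_periodic (x : FullShift n) (e P : ℤ) (hP : 0 < P) :
    (fun y : FullShift n => shiftZ 1 y)^[P.toNat] (perExt x e P) = perExt x e P := by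
  rw [iterate_shift, Int.toNat_of_nonneg hP.le]
  funext j
  show perExt x e P (j - P) = perExt x e P j
  unfold perExt
  congr 2
  have : j - P - e = (j - e) + P * (-1) := by ring
  rw [this, Int.add_mul_emod_self_left]




lemma contradiction_step (f : FullShift n → FullShift n)
    (hm : ∀ (m : ℤ) (x), f (shiftZ m x) = shiftZ m (f x)) (r : ℕ)
    (hr : ∀ x y : FullShift n, (∀ t : ℤ, |t| ≤ (r : ℤ) → x t = y t) → f x 0 = f y 0)
    (hinj : Set.InjOn f
      {x : FullShift n | ∃ k : ℕ, 0 < k ∧ (fun y => shiftZ 1 y)^[k] x = x})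
    (x y : FullShift n) (hfxy : f x = f y) (e P : ℤ) (hP : 0 < P)
    (d : ℤ) (hd1 : e ≤ d) (hd2 : d < e + P) (hd : x d ≠ y d)
    (hq : ∀ p : ℤ, (∀ t : ℤ, |t| ≤ (r : ℤ) → perExt x e P (p + t) = perExt y e P (p + t)) ∨
        ∃ q : ℤ, (∀ t : ℤ, |t| ≤ (r : ℤ) → perExt x e P (p + t) = x (q + t)) ∧
                 (∀ t : ℤ, |t| ≤ (r : ℤ) → perExt y e P (p + t) = y (q + t))) :
    False := by
  have hfx'y' : f (perExt x e P) = f (perExt y e P) := by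
    funext p
    rcases hq p with h | ⟨q, hx, hy⟩
    · exact window_det f hm r hr _ _ p p h
    · calc f (perExt x e P) p = f x q := window_det f hm r hr _ _ p q hx
        _ = f y q := by rw [hfxy]
        _ = f (perExt y e P) p := (window_det f hm r hr _ _ p q hy).symm
  have hmem : ∀ z : FullShift n, perExt z e P ∈
      {x : FullShift n | ∃ k : ℕ, 0 < k ∧ (fun y => shiftZ 1 y)^[k] x = x} := by
    intro z
    exact ⟨P.toNat, by omega, perExt_periodic z e P hP⟩
  have heq := hinj (hmem x) (hmem y) hfx'y'
  apply hd
  have h1 := perExt_eq_self x e P d hd1 hd2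
  have h2 := perExt_eq_self y e P d hd1 hd2
  rw [← h1, ← h2, heq]

lemma injective_of (f : FullShift n → FullShift n)
    (hm : ∀ (m : ℤ) (x), f (shiftZ m x) = shiftZ m (f x)) (r : ℕ)
    (hr : ∀ x y : FullShift n, (∀ t : ℤ, |t| ≤ (r : ℤ) → x t = y t) → f x 0 = f y 0)
    (hinj : Set.InjOn f
      {x : FullShift n | ∃ k : ℕ, 0 < k ∧ (fun y => shiftZ 1 y)^[k] x = x}) :
    Function.Injective f := by
  classical
  intro x y hfxy
  by_contra hne
  have hD : ∃ i, x i ≠ y i := by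
    by_contra h
    push_neg at h
    exact hne (funext h)
  obtain ⟨d₀, hd₀⟩ := hD
  set D : Set ℤ := {i | x i ≠ y i} with hDdef
  by_cases hfin : D.Finite
  · -- Case A: finitely many disagreements
    obtain ⟨N, hN⟩ : ∃ N : ℕ, ∀ i ∈ D, |i| ≤ (N : ℤ) := by
      obtain ⟨F, hF⟩ := hfin.exists_finset_coe
      refine ⟨F.sup (fun i => i.natAbs), fun i hi => ?_⟩
      have hiF : i ∈ F := by rw [← hF] at hi; exact_mod_cast hi
      have := Finset.le_sup (f := fun i : ℤ => i.natAbs) hiF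
      rw [Int.abs_eq_natAbs]
      exact_mod_cast this
    set R : ℤ := 2 * r + 1 with hR
    set e : ℤ := -((N : ℤ) + R) with he
    set P : ℤ := 2 * ((N : ℤ) + R) with hPdef
    have hP : 0 < P := by omega
    refine contradiction_step f hm r hr hinj x y hfxy e P hP d₀ ?_ ?_ hd₀ ?_
    · have := hN d₀ hd₀; rw [abs_le] at this; omega
    · have := hN d₀ hd₀; rw [abs_le] at this; omega
    · intro p
      set j : ℤ := (p - r - e) % P with hj
      have hj0 : 0 ≤ j := Int.emod_nonneg _ (by omega)
      have hjP : j < P := Int.emod_lt_of_pos _ hP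
      have key : ∀ t : ℤ, (p + t - e) % P = (j + (r + t)) % P := by
        intro t
        have h1 : p + t - e = (j + (r + t)) + P * ((p - r - e) / P) := by
          have := Int.emod_add_mul_ediv (p - r - e) P
          omega
        rw [h1, Int.add_mul_emod_self_left]
      by_cases hcase : j + 2 * r < P
      · right
        refine ⟨e + j + r, fun t ht => ?_, fun t ht => ?_⟩ <;>
        · show _ = _
          unfold perExt
          rw [key t, Int.emod_eq_of_lt (by rw [abs_le] at ht; omega) (by rw [abs_le] at ht; omega)]
          congr 1; ring
      · left
        intro t ht
        rw [abs_le] at ht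
        show x (e + (p + t - e) % P) = y (e + (p + t - e) % P)
        rw [key t]
        set s : ℤ := (j + (r + t)) % P with hs
        have hs0 : 0 ≤ s := Int.emod_nonneg _ (by omega)
        have hsP : s < P := Int.emod_lt_of_pos _ hP
        have hsval : s = j + (r + t) ∨ s = j + (r + t) - P := by
          rcases lt_or_ge (j + (r + t)) P with h | h
          · left; rw [hs, Int.emod_eq_of_lt (by omega) h]
          · right
            rw [hs]
            have : j + (r + t) - P = (j + (r + t)) + P * (-1) := by ring
            rw [← Int.add_mul_emod_self_left (a := j + (r + t)) (b := P) (c := -1), ← this,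
              Int.emod_eq_of_lt (by omega) (by omega)]
        by_contra hxy'
        have hmem : e + s ∈ D := hxy'
        have := hN _ hmem
        rw [abs_le] at this
        rcases hsval with h | h <;> omega
  · -- Case B: infinitely many disagreements
    have hDinf : D.Infinite := hfin
    set V := ({t : ℤ // t ∈ Finset.Icc (-(r : ℤ)) (r : ℤ)} → A n × A n) with hV
    set W : ℤ → V := fun c t => (x (c + t.1), y (c + t.1)) with hW
    have hfiber : ∃ v : V, {d | d ∈ D ∧ W d = v}.Infinite := by
      by_contra h
      push_neg at h
      have hsub : D ⊆ ⋃ v : V, {d | d ∈ D ∧ W d = v} :=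
        fun d hd => Set.mem_iUnion.mpr ⟨W d, hd, rfl⟩
      exact hDinf ((Set.finite_iUnion h).subset hsub)
    obtain ⟨v, hv⟩ := hfiber
    obtain ⟨c1, hc1⟩ := hv.nonempty
    have hv2 : ({d | d ∈ D ∧ W d = v} \ Set.Icc (c1 - (2 * r + 1)) (c1 + (2 * r + 1))).Infinite :=
      hv.diff (Set.finite_Icc _ _)
    obtain ⟨c, hc⟩ := hv2.nonempty
    have main : ∀ a b : ℤ, a ∈ D → W a = W b → a + 2 * r < b → False := by
      intro a b haD hWab hab
      have hwin : ∀ t : ℤ, -(r : ℤ) ≤ t → t ≤ (r : ℤ) →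
          x (a + t) = x (b + t) ∧ y (a + t) = y (b + t) := by
        intro t h1 h2
        have := congrFun hWab ⟨t, Finset.mem_Icc.mpr ⟨h1, h2⟩⟩
        exact ⟨congrArg Prod.fst this, congrArg Prod.snd this⟩
      set e : ℤ := a - r with he
      set P : ℤ := b - a with hPdef
      have hP : 0 < P := by omega
      refine contradiction_step f hm r hr hinj x y hfxy e P hP a (by omega) (by omega) haD ?_
      intro p
      right
      set j : ℤ := (p - r - e) % P with hj
      have hj0 : 0 ≤ j := Int.emod_nonneg _ (by omega)
      have hjP : j < P := Int.emod_lt_of_pos _ hP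
      have key : ∀ t : ℤ, (p + t - e) % P = (j + (r + t)) % P := by
        intro t
        have h1 : p + t - e = (j + (r + t)) + P * ((p - r - e) / P) := by
          have := Int.emod_add_mul_ediv (p - r - e) P
          omega
        rw [h1, Int.add_mul_emod_self_left]
      have gen : ∀ z : FullShift n, (∀ t : ℤ, -(r : ℤ) ≤ t → t ≤ (r : ℤ) → z (a + t) = z (b + t)) →
          ∀ t : ℤ, |t| ≤ (r : ℤ) → perExt z e P (p + t) = z (e + j + r + t) := by
        intro z hz t ht
        rw [abs_le] at ht
        show z (e + (p + t - e) % P) = _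
        rw [key t]
        rcases lt_or_ge (j + ((r : ℤ) + t)) P with h | h
        · rw [Int.emod_eq_of_lt (by omega) h]
          congr 1; ring
        · have hmod : (j + ((r : ℤ) + t)) % P = j + (r + t) - P := by
            have heq : j + ((r : ℤ) + t) = (j + (r + t) - P) + P * 1 := by ring
            conv_lhs => rw [heq]
            rw [Int.add_mul_emod_self_left]
            exact Int.emod_eq_of_lt (by omega) (by omega)
          rw [hmod]
          have hzz := hz (e + (j + (r + t) - P) - a) (by omega) (by omega)
          have h1 : a + (e + (j + (r + t) - P) - a) = e + (j + (r + t) - P) := by ring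
          have h2 : b + (e + (j + (r + t) - P) - a) = e + j + r + t := by
            rw [he, hPdef]; ring
          rw [h1, h2] at hzz
          exact hzz
      exact ⟨e + j + r, gen x (fun t h1 h2 => (hwin t h1 h2).1),
        gen y (fun t h1 h2 => (hwin t h1 h2).2)⟩
    have hcIcc := hc.2
    rw [Set.mem_Icc] at hcIcc
    push_neg at hcIcc
    rcases lt_or_ge c c1 with hlt | hle
    · have : c + 2 * r < c1 := by
        rcases lt_or_ge c (c1 - (2 * ↑r + 1)) with h | h
        · omega
        · exact absurd (hcIcc h) (by omega)
      exact main c c1 hc.1.1 (hc.1.2.trans hc1.2.symm) this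
    · have : c1 + 2 * r < c := by
        rcases lt_or_ge c (c1 - (2 * ↑r + 1)) with h | h
        · omega
        · have := hcIcc h; omega
      exact main c1 c hc1.1 (hc1.2.trans hc.1.2.symm) this




lemma per_finite (k : ℕ) (hk : 0 < k) : {x : FullShift n | shiftZ (k : ℤ) x = x}.Finite := by
  classical
  set S := {x : FullShift n | shiftZ (k : ℤ) x = x} with hS
  have key : ∀ x ∈ S, ∀ j : ℤ, x j = x (j % (k : ℤ)) := by
    intro x hx j
    have hstep : ∀ i : ℤ, x (i - k) = x i := fun i => congrFun hx i
    have hstep' : ∀ i : ℤ, x (i + k) = x i := by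
      intro i
      have := hstep (i + k)
      simpa using this.symm
    have hmul : ∀ m : ℤ, ∀ i : ℤ, x (i + (k : ℤ) * m) = x i := by
      intro m
      induction m using Int.induction_on with
      | zero => intro i; simp
      | succ m ih =>
        intro i
        have h1 : i + (k : ℤ) * ((m : ℤ) + 1) = (i + (k : ℤ) * m) + k := by ring
        rw [h1, hstep', ih]
      | pred m ih =>
        intro i
        have h1 : i + (k : ℤ) * (-(m : ℤ) - 1) = (i + (k : ℤ) * (-(m : ℤ))) - k := by ring
        rw [h1, hstep, ih]
    have h1 : j = j % (k : ℤ) + (k : ℤ) * (j / (k : ℤ)) := by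
      have := Int.emod_add_mul_ediv j (k : ℤ); omega
    conv_lhs => rw [h1]
    exact hmul _ _
  have hIm : Set.InjOn (fun x : FullShift n => fun i : Fin k => x (i : ℤ)) S := by
    intro a ha b hb hab
    funext j
    rw [key a ha j, key b hb j]
    have h0 : 0 ≤ j % (k : ℤ) := Int.emod_nonneg _ (by positivity)
    have h1 : j % (k : ℤ) < k := Int.emod_lt_of_pos _ (by exact_mod_cast hk)
    have := congrFun hab ⟨(j % (k : ℤ)).toNat, by omega⟩
    simpa [Int.toNat_of_nonneg h0] using this
  exact Set.Finite.of_finite_image (Set.Finite.subset (Set.finite_univ) (Set.subset_univ _)) hIm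

lemma per_subset_range (f : FullShift n → FullShift n)
    (hm : ∀ (m : ℤ) (x), f (shiftZ m x) = shiftZ m (f x))
    (hinj : Set.InjOn f
      {x : FullShift n | ∃ k : ℕ, 0 < k ∧ (fun y => shiftZ 1 y)^[k] x = x})
    (k : ℕ) (hk : 0 < k) :
    {x : FullShift n | shiftZ (k : ℤ) x = x} ⊆ Set.range f := by
  set S := {x : FullShift n | shiftZ (k : ℤ) x = x} with hS
  have hfin : S.Finite := per_finite k hk
  have hmaps : Set.MapsTo f S S := by
    intro x hx
    show shiftZ (k : ℤ) (f x) = f x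
    rw [← hm (k : ℤ) x, hx]
  have hinjS : Set.InjOn f S := by
    apply hinj.mono
    intro x hx
    exact ⟨k, hk, by rw [iterate_shift]; exact hx⟩
  have hbij := (hfin.injOn_iff_bijOn_of_mapsTo hmaps).mp hinjS
  intro x hx
  obtain ⟨z, _, hz⟩ := hbij.surjOn hx
  exact ⟨z, hz⟩

lemma surjective_of (f : FullShift n → FullShift n) (hc : Continuous f)
    (hm : ∀ (m : ℤ) (x), f (shiftZ m x) = shiftZ m (f x))
    (hinj : Set.InjOn f
      {x : FullShift n | ∃ k : ℕ, 0 < k ∧ (fun y => shiftZ 1 y)^[k] x = x}) :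
    Function.Surjective f := by
  classical
  have hclosed : IsClosed (Set.range f) := (isCompact_range hc).isClosed
  intro z
  have hz : z ∈ closure (Set.range f) := by
    rw [mem_closure_iff_nhds]
    intro s hs
    rw [nhds_pi, Filter.mem_pi] at hs
    obtain ⟨I, hIfin, t, ht, hsub⟩ := hs
    obtain ⟨M, hM⟩ : ∃ M : ℕ, ∀ i ∈ I, |i| ≤ (M : ℤ) := by
      obtain ⟨F, hF⟩ := hIfin.exists_finset_coe
      refine ⟨F.sup (fun i => i.natAbs), fun i hi => ?_⟩
      have hiF : i ∈ F := by rw [← hF] at hi; exact_mod_cast hi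
      have := Finset.le_sup (f := fun i : ℤ => i.natAbs) hiF
      rw [Int.abs_eq_natAbs]
      exact_mod_cast this
    set k : ℕ := 2 * M + 1 with hk
    set w : FullShift n := perExt z (-(M : ℤ)) (k : ℤ) with hw
    have hwper : shiftZ (k : ℤ) w = w := by
      funext j
      show perExt z (-(M : ℤ)) (k : ℤ) (j - k) = perExt z (-(M : ℤ)) (k : ℤ) j
      unfold perExt
      congr 2
      have h1 : j - (k : ℤ) - (-(M : ℤ)) = (j - (-(M : ℤ))) + (k : ℤ) * (-1) := by ring
      rw [h1, Int.add_mul_emod_self_left]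
    have hwz : ∀ i : ℤ, |i| ≤ (M : ℤ) → w i = z i := by
      intro i hi
      rw [abs_le] at hi
      exact perExt_eq_self z _ _ i (by omega) (by push_cast; omega)
    have hwrange : w ∈ Set.range f :=
      per_subset_range f hm hinj k (by omega) hwper
    refine ⟨w, ?_, hwrange⟩
    apply hsub
    rw [Set.mem_pi]
    intro i hi
    rw [hwz i (hM i hi)]
    have := ht i
    rwa [mem_nhds_discrete] at this
  rwa [hclosed.closure_eq] at hz

end Aux

/-- Let `φ : X_n^ℤ → X_n^ℤ` be a continuous map commuting with the
shift `σ_n`.  If `φ` is injective on the set of `σ_n`-periodic points, then `φ` is a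
homeomorphism, i.e. an automorphism of the shift dynamical system. -/
theorem injOn_periodic_points_homeomorph (n : ℕ) (f : FullShift n → FullShift n)
    (hc : Continuous f) (hcomm : ∀ x, f (shiftZ 1 x) = shiftZ 1 (f x))
    (hinj : Set.InjOn f
      {x : FullShift n | ∃ k : ℕ, 0 < k ∧ (fun y => shiftZ 1 y)^[k] x = x}) :
    ∃ g : FullShift n ≃ₜ FullShift n, ∀ x, g x = f x := by
  have hm := comm_int f hcomm
  obtain ⟨r, hr⟩ := exists_radius f hc
  have hinjf : Function.Injective f := injective_of f hm r hr hinj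
  have hsurj : Function.Surjective f := surjective_of f hc hm hinj
  let e : FullShift n ≃ FullShift n := Equiv.ofBijective f ⟨hinjf, hsurj⟩
  have hce : Continuous e := hc
  exact ⟨hce.homeoOfEquivCompactToT2, fun x => rfl⟩

end ShiftPaper
end
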